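/- Let M ∈ ℕ, β ∈ (0,1), and e : Fin M → ℕ → ℝ with each sequence e j converging to 0. Let j* : ℕ → Fin M be arbitrary, and define x : ℕ → ℝ by x (k+1) = e (j* (k+1)) (k+1) + β · x k. Then x k → 0. -/
import Mathlib


theorem stmt_13 (M : ℕ) (β : ℝ) (hβ : β ∈ Set.Ioo (0 : ℝ) 1)
    (e : Fin M → ℕ → ℝ)
    (he : ∀ j, Filter.Tendsto (e j) Filter.atTop (nhds 0))
    (jstar : ℕ → Fin M) (x : ℕ → ℝ)
    (hx : ∀ k, x (k + 1) = e (jstar (k + 1)) (k + 1) + β * x k) :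
    Filter.Tendsto x Filter.atTop (nhds 0) := by
  obtain ⟨hβ0, hβ1⟩ := hβ
  have h1β : (0:ℝ) < 1 - β := by linarith
  rw [NormedAddCommGroup.tendsto_nhds_zero]
  intro ε hε
  set δ := ε * (1 - β) / 2 with hδdef
  have hδ : 0 < δ := by positivity
  have hu : ∀ᶠ k in Filter.atTop, ∀ j, |e j k| ≤ δ := by
    rw [Filter.eventually_all]
    intro j
    have h := (he j)
    rw [NormedAddCommGroup.tendsto_nhds_zero] at h
    filter_upwards [h δ hδ] with k hk
    exact le_of_lt (by simpa using hk)
  obtain ⟨N, hN⟩ := Filter.eventually_atTop.mp hu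
  have key : ∀ m, |x (N + m)| ≤ β ^ m * |x N| + ε / 2 := by
    intro m
    induction m with
    | zero => simp; linarith
    | succ m ih =>
      have h1 : x (N + m + 1) = e (jstar (N + m + 1)) (N + m + 1) + β * x (N + m) :=
        hx (N + m)
      have h2 : |e (jstar (N + m + 1)) (N + m + 1)| ≤ δ :=
        hN (N + m + 1) (by omega) _
      have h3 : |x (N + (m + 1))| ≤ δ + β * |x (N + m)| := by
        have : N + (m + 1) = N + m + 1 := by omega
        rw [this, h1]
        calc |e (jstar (N + m + 1)) (N + m + 1) + β * x (N + m)|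
            ≤ |e (jstar (N + m + 1)) (N + m + 1)| + |β * x (N + m)| := abs_add_le _ _
          _ ≤ δ + β * |x (N + m)| := by
              rw [abs_mul, abs_of_pos hβ0]; linarith
    
      have h4 : β * |x (N + m)| ≤ β * (β ^ m * |x N| + ε / 2) :=
        mul_le_mul_of_nonneg_left ih (le_of_lt hβ0)
      have : β * (β ^ m * |x N| + ε / 2) = β ^ (m + 1) * |x N| + β * (ε / 2) := by ring
      have hδeq : δ + β * (ε / 2) = ε / 2 := by rw [hδdef]; ring
      calc |x (N + (m + 1))| ≤ δ + β * |x (N + m)| := h3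
        _ ≤ δ + β * (β ^ m * |x N| + ε / 2) := by linarith
        _ = β ^ (m + 1) * |x N| + (δ + β * (ε / 2)) := by ring
        _ = β ^ (m + 1) * |x N| + ε / 2 := by rw [hδeq]
  have hβm : Filter.Tendsto (fun m => β ^ m * |x N|) Filter.atTop (nhds 0) := by
    have := tendsto_pow_atTop_nhds_zero_of_lt_one (le_of_lt hβ0) hβ1
    simpa using this.mul_const |x N|
  rw [NormedAddCommGroup.tendsto_nhds_zero] at hβm
  obtain ⟨m0, hm0⟩ := Filter.eventually_atTop.mp (hβm (ε / 2) (by linarith))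
  have hm0' : β ^ m0 * |x N| < ε / 2 := by
    have := hm0 m0 le_rfl
    rw [Real.norm_eq_abs, abs_mul, abs_pow, abs_of_pos hβ0, abs_abs] at this
    exact this
  rw [Filter.eventually_atTop]
  refine ⟨N + m0, fun k hk => ?_⟩
  obtain ⟨m, rfl⟩ : ∃ m, k = N + m := ⟨k - N, by omega⟩
  have hm : m0 ≤ m := by omega
  have hpow : β ^ m ≤ β ^ m0 :=
    pow_le_pow_of_le_one (le_of_lt hβ0) (le_of_lt hβ1) hm
  have : β ^ m * |x N| ≤ β ^ m0 * |x N| :=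
    mul_le_mul_of_nonneg_right hpow (abs_nonneg _)
  calc ‖x (N + m)‖ = |x (N + m)| := rfl
    _ ≤ β ^ m * |x N| + ε / 2 := key m
    _ < ε := by linarith
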